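/- For every position m with 1 ≤ m ≤ n and every nonempty proper prefix u of lfo_s(m), there exists a maximal location ⟨k,l⟩ of s such that Support(⟨k,l⟩) = m and O_s^{⟨k,l⟩} = u. -/

import Mathlib

/-- The fingerprint `C_s(i,j)`: the set of distinct letters occurring in `s_i … s_j`. -/
def fingerprint {α : Type*} [DecidableEq α] (s : ℕ → α) (i j : ℕ) : Finset α :=
  (Finset.Icc i j).image s

/-- `⟨i,j⟩` is a maximal location of the sequence `s_1 … s_n`. -/
def IsMaxLoc {α : Type*} [DecidableEq α] (s : ℕ → α) (n i j : ℕ) : Prop :=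
  1 ≤ i ∧ i ≤ j ∧ j ≤ n ∧
    (1 < i → s (i - 1) ∉ fingerprint s i j) ∧
    (j < n → s (j + 1) ∉ fingerprint s i j)

/-- `fo_s(i,j)`: the string of the first occurrences of each distinct letter
encountered when reading `s_i … s_j` from left to right. -/
def fo {α : Type*} [DecidableEq α] (s : ℕ → α) (i j : ℕ) : List α :=
  ((List.range' i (j + 1 - i)).filter
    (fun p => decide (∀ q ∈ Finset.Ico i p, s q ≠ s p))).map s

/-- `Support([i,j])`: the minimum over letters `a ∈ C_s(i,j)` of the position of
the rightmost occurrence of `a` in `s_i … s_j`. -/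
noncomputable def support {α : Type*} [DecidableEq α] (s : ℕ → α) (i j : ℕ) : ℕ :=
  sInf {q | ∃ a ∈ fingerprint s i j, q = sSup {p | i ≤ p ∧ p ≤ j ∧ s p = a}}

/-- `O_s^{[i,j]} = fo_s(Support([i,j]), j)`. -/
noncomputable def Ostr {α : Type*} [DecidableEq α] (s : ℕ → α) (i j : ℕ) : List α :=
  fo s (support s i j) j

/-- The substring `s_i … s_j` as a list. -/
def substr {α : Type*} (s : ℕ → α) (i j : ℕ) : List α :=
  (List.range' i (j + 1 - i)).map s

/-- The position of the next occurrence of `s_i` after position `i`, within the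
extended sequence `s_1 … s_{n+1}`, and `n + 2` if there is none. -/
noncomputable def nxt {α : Type*} (s : ℕ → α) (n i : ℕ) : ℕ :=
  sInf ({j | i < j ∧ j ≤ n + 1 ∧ s j = s i} ∪ {n + 2})

/-- `lfo_s(i) = fo_s(i, j − 1)` where `j` is the minimal position with `i < j` and
`s_j = s_i` if it exists and `j = n + 2` otherwise, computed in the sequence
extended by the sentinel `s_{n+1} = #`. -/
noncomputable def lfo {α : Type*} [DecidableEq α] (s : ℕ → α) (n i : ℕ) : List α :=
  fo s i (nxt s n i - 1)

/-- For every position `m` with `1 ≤ m ≤ n` and every nonempty proper prefix `u` of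
`lfo_s(m)` (computed with a sentinel letter `s_{n+1}` not occurring in `s_1 … s_n`),
there exists a maximal location `⟨k,l⟩` of `s` with `Support(⟨k,l⟩) = m` and
`O_s^{⟨k,l⟩} = u`. -/
theorem exists_maxLoc_of_prefix_lfo {α : Type*} [DecidableEq α]
    (s : ℕ → α) (n m : ℕ) (hm1 : 1 ≤ m) (hmn : m ≤ n)
    (hsent : ∀ p, 1 ≤ p → p ≤ n → s p ≠ s (n + 1))
    (u : List α) (hne : u ≠ []) (hpre : u <+: lfo s n m) (hproper : u ≠ lfo s n m) :
    ∃ k l, IsMaxLoc s n k l ∧ support s k l = m ∧ Ostr s k l = u := by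
  classical
  -- basic facts about nxt
  have hnxt_mem : nxt s n m ∈ ({j | m < j ∧ j ≤ n + 1 ∧ s j = s m} ∪ {n + 2} : Set ℕ) :=
    Nat.sInf_mem ⟨n + 2, Or.inr rfl⟩
  have hnxt_le : nxt s n m ≤ n + 2 := Nat.sInf_le (Or.inr rfl)
  have hm_lt_nxt : m < nxt s n m := by
    rcases hnxt_mem with h | h
    · exact h.1
    · simp only [Set.mem_singleton_iff] at h; omega
  have hnorep : ∀ q, m < q → q ≤ nxt s n m - 1 → s q ≠ s m := by
    intro q hq1 hq2 hEq
    have : nxt s n m ≤ q := Nat.sInf_le (Or.inl ⟨hq1, by omega, hEq⟩)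
    omega
  -- the list of first-occurrence positions
  set J : ℕ := nxt s n m - 1 with hJdef
  have hJn : J ≤ n + 1 := by omega
  set F : List ℕ := (List.range' m (J + 1 - m)).filter
      (fun p => decide (∀ q ∈ Finset.Ico m p, s q ≠ s p)) with hFdef
  have hlfoF : lfo s n m = F.map s := rfl
  set t : ℕ := u.length with htdef
  have ht1 : 1 ≤ t := List.length_pos_iff.mpr hne
  have ht : t < F.length := by
    have h1 : u.length ≤ (lfo s n m).length := hpre.length_le
    have h2 : u.length ≠ (lfo s n m).length := by
      intro h
      apply hproper
      have := List.prefix_iff_eq_take.mp hpre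
      rw [this, h, List.take_length]
    have h3 : (lfo s n m).length = F.length := by rw [hlfoF, List.length_map]
    omega
  have hmJ : m ≤ J := by
    have h1 : F.length ≤ (List.range' m (J + 1 - m)).length :=
      (List.filter_sublist).length_le
    rw [List.length_range'] at h1
    omega
  have hpw : F.Pairwise (· < ·) :=
    (List.pairwise_lt_range' (s := m) (n := J + 1 - m) 1).sublist (List.filter_sublist)
  have hmono : ∀ i j : Fin F.length, i < j → F.get i < F.get j :=
    List.pairwise_iff_get.mp hpw
  have hFmem : ∀ q, q ∈ F ↔ (m ≤ q ∧ q ≤ J) ∧ (∀ r ∈ Finset.Ico m q, s r ≠ s q) := by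
    intro q
    rw [hFdef, List.mem_filter, List.mem_range'_1]
    constructor
    · rintro ⟨h1, h2⟩
      exact ⟨⟨h1.1, by omega⟩, of_decide_eq_true h2⟩
    · rintro ⟨h1, h2⟩
      exact ⟨⟨h1.1, by omega⟩, decide_eq_true h2⟩
  -- F starts with m
  have hF0 : ∃ F', F = m :: F' := by
    have hrange : List.range' m (J + 1 - m) = m :: List.range' (m + 1) (J - m) := by
      rw [show J + 1 - m = (J - m) + 1 from by omega, List.range'_succ]
    have hPm : (∀ q ∈ Finset.Ico m m, s q ≠ s m) := by simp
    rw [hFdef, hrange, List.filter_cons, decide_eq_true hPm]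
    exact ⟨_, rfl⟩
  obtain ⟨F', hF'⟩ := hF0
  have hget0 : F.get ⟨0, by omega⟩ = m := by
    simp [hF']
  -- the (t+1)-st first-occurrence position p
  set p : ℕ := F.get ⟨t, ht⟩ with hpdef
  have hp_mem : p ∈ F := F.get_mem ⟨t, ht⟩
  have hp_facts := (hFmem p).mp hp_mem
  have hpm : m ≤ p := hp_facts.1.1
  have hpJ : p ≤ J := hp_facts.1.2
  have hpfirst : ∀ r ∈ Finset.Ico m p, s r ≠ s p := hp_facts.2
  have hmp : m < p := by
    have := hmono ⟨0, by omega⟩ ⟨t, ht⟩ (by exact ht1)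
    rw [hget0] at this
    exact this
  set l : ℕ := p - 1 with hldef
  have hml : m ≤ l := by omega
  have hln : l ≤ n := by omega
  -- split F at p
  set F₁ : List ℕ := (List.range' m (p - m)).filter
      (fun p' => decide (∀ q ∈ Finset.Ico m p', s q ≠ s p')) with hF1def
  set F₂ : List ℕ := (List.range' p (J + 1 - p)).filter
      (fun p' => decide (∀ q ∈ Finset.Ico m p', s q ≠ s p')) with hF2def
  have hsplit : F = F₁ ++ F₂ := by
    have h1 := List.range'_append (s := m) (m := p - m) (n := J + 1 - p) (step := 1)
    rw [show m + 1 * (p - m) = p from by omega,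
      show p - m + (J + 1 - p) = J + 1 - m from by omega] at h1
    rw [hFdef, ← h1, List.filter_append]
  have hF2cons : ∃ F₂', F₂ = p :: F₂' := by
    have hrange : List.range' p (J + 1 - p) = p :: List.range' (p + 1) (J - p) := by
      rw [show J + 1 - p = (J - p) + 1 from by omega, List.range'_succ]
    rw [hF2def, hrange, List.filter_cons, decide_eq_true hpfirst]
    exact ⟨_, rfl⟩
  obtain ⟨F₂', hF₂'⟩ := hF2cons
  have hF1len_lt : F₁.length < F.length := by
    rw [hsplit, hF₂', List.length_append, List.length_cons]
    omega
  have hgetF1 : F.get ⟨F₁.length, hF1len_lt⟩ = p := by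
    have heq := List.get_of_eq hsplit ⟨F₁.length, hF1len_lt⟩
    rw [heq, List.get_eq_getElem]
    simp only [Fin.coe_cast]
    rw [List.getElem_append_right (le_refl F₁.length)]
    simp [hF₂']
  have hF1len : F₁.length = t := by
    by_contra hnee
    rcases Nat.lt_or_ge F₁.length t with h | h
    · have := hmono ⟨F₁.length, hF1len_lt⟩ ⟨t, ht⟩ h
      rw [hgetF1, ← hpdef] at this
      exact lt_irrefl _ this
    · have h' : t < F₁.length := by omega
      have := hmono ⟨t, ht⟩ ⟨F₁.length, hF1len_lt⟩ h'
      rw [hgetF1, ← hpdef] at this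
      exact lt_irrefl _ this
  -- u = fo s m l
  have hfo_ml : fo s m l = F₁.map s := by
    show ((List.range' m (l + 1 - m)).filter _).map s = _
    rw [show l + 1 - m = p - m from by omega]
  have hu_eq : fo s m l = u := by
    have hu : u = List.take t (lfo s n m) := List.prefix_iff_eq_take.mp hpre
    rw [hu, hlfoF, hsplit, List.map_append,
      List.take_append_of_le_length (by rw [List.length_map, hF1len]),
      List.take_of_length_le (by rw [List.length_map, hF1len]), hfo_ml]
  -- membership in fingerprints
  have hfp : ∀ i j : ℕ, ∀ a : α, a ∈ fingerprint s i j ↔ ∃ q, i ≤ q ∧ q ≤ j ∧ s q = a := by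
    intro i j a
    simp only [fingerprint, Finset.mem_image, Finset.mem_Icc]
    constructor
    · rintro ⟨q, ⟨h1, h2⟩, h3⟩; exact ⟨q, h1, h2, h3⟩
    · rintro ⟨q, h1, h2, h3⟩; exact ⟨q, ⟨h1, h2⟩, h3⟩
  -- choice of k
  set K : Set ℕ := {k' | 1 ≤ k' ∧ k' ≤ m ∧
      ∀ q, k' ≤ q → q < m → s q ∈ fingerprint s m l} with hKdef
  have hmK : m ∈ K := ⟨hm1, le_refl m, fun q h1 h2 => absurd h2 (by omega)⟩
  set k : ℕ := sInf K with hkdef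
  have hkK : k ∈ K := Nat.sInf_mem ⟨m, hmK⟩
  obtain ⟨hk1, hkm, hkprop⟩ := hkK
  have hCeq : fingerprint s k l = fingerprint s m l := by
    ext a
    rw [hfp, hfp]
    constructor
    · rintro ⟨q, h1, h2, rfl⟩
      by_cases hqm : m ≤ q
      · exact ⟨q, hqm, h2, rfl⟩
      · have := hkprop q h1 (by omega)
        rw [hfp] at this
        exact this
    · rintro ⟨q, h1, h2, h3⟩
      exact ⟨q, by omega, h2, h3⟩
  -- maximality
  have hmaxloc : IsMaxLoc s n k l := by
    refine ⟨hk1, by omega, hln, ?_, ?_⟩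
    · intro h1k hmem
      rw [hCeq] at hmem
      have hk1K : (k - 1) ∈ K := by
        refine ⟨by omega, by omega, fun q hq1 hq2 => ?_⟩
        by_cases h : k ≤ q
        · exact hkprop q h hq2
        · have : q = k - 1 := by omega
          rw [this]
          exact hmem
      have := Nat.sInf_le hk1K
      omega
    · intro hlnn hmem
      rw [hCeq, hfp] at hmem
      obtain ⟨q, hq1, hq2, hq3⟩ := hmem
      have hlp : l + 1 = p := by omega
      rw [hlp] at hq3
      exact hpfirst q (Finset.mem_Ico.mpr ⟨hq1, by omega⟩) hq3
  -- support = m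
  have hnoSm : ∀ q, m < q → q ≤ l → s q ≠ s m := fun q h1 h2 =>
    hnorep q h1 (by omega)
  have hsupSm : sSup {p' | k ≤ p' ∧ p' ≤ l ∧ s p' = s m} = m := by
    have hmS' : m ∈ {p' | k ≤ p' ∧ p' ≤ l ∧ s p' = s m} := ⟨hkm, hml, rfl⟩
    have hbdd : BddAbove {p' | k ≤ p' ∧ p' ≤ l ∧ s p' = s m} :=
      ⟨l, fun x hx => hx.2.1⟩
    apply le_antisymm
    · refine csSup_le ⟨m, hmS'⟩ (fun b hb => ?_)
      by_contra h
      push_neg at h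
      exact hnoSm b h hb.2.1 hb.2.2
    · exact le_csSup hbdd hmS'
  have hmT : m ∈ {q | ∃ a ∈ fingerprint s k l, q = sSup {p' | k ≤ p' ∧ p' ≤ l ∧ s p' = a}} :=
    ⟨s m, (hfp k l (s m)).mpr ⟨m, hkm, hml, rfl⟩, hsupSm.symm⟩
  have hlow : ∀ q ∈ {q | ∃ a ∈ fingerprint s k l, q = sSup {p' | k ≤ p' ∧ p' ≤ l ∧ s p' = a}},
      m ≤ q := by
    rintro q ⟨a, ha, rfl⟩
    rw [hCeq, hfp] at ha
    obtain ⟨r, hr1, hr2, hr3⟩ := ha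
    have hrS : r ∈ {p' | k ≤ p' ∧ p' ≤ l ∧ s p' = a} := ⟨by omega, hr2, hr3⟩
    have := le_csSup (⟨l, fun x hx => hx.2.1⟩ : BddAbove {p' | k ≤ p' ∧ p' ≤ l ∧ s p' = a}) hrS
    omega
  have hsupport : support s k l = m :=
    le_antisymm (Nat.sInf_le hmT) (le_csInf ⟨m, hmT⟩ hlow)
  refine ⟨k, l, hmaxloc, hsupport, ?_⟩
  rw [Ostr, hsupport, hu_eq]
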